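/- Let u ∈ K with u ≠ 0 and σ(u) = −u, set s₀ := (u, 0) ∈ A and μ := u² ∈ F. Define, for x, y ∈ A, U_x(y) := 2(x·ȳ)·x − (x·x̄)·y and ψ(x, y) := x·ȳ − y·x̄. Then for all x = (s, b) ∈ A: ψ(x, U_x(s₀·x)) · s₀ = 6·μ·ν(s,b)·(1,0), where ν(s,b) := (s·σ(s) − T(b, φ(b)))² − 4·T(b♯, φ(b)♯) + 4·(γ⁻¹·s·N(b) + σ(γ⁻¹·s·N(b))). In other words, the norm of the structurable algebra A is given by ν(s,b) = (Nr(s) − T(b, φ(b)))² − 4·T(b♯, φ(b)♯) + 4·Tr(γ⁻¹·s·N(b)), where Nr and Tr denote the norm and trace of K/F. -/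

import Mathlib

/-- A cubic norm structure over a commutative ring `K`. -/
structure CubicNormStructure (K : Type*) [CommRing K]
    (J : Type*) [AddCommGroup J] [Module K J] where
  N : J → K
  sharp : J → J
  T : J → J → K
  one : J
  one_ne_zero : one ≠ 0
  T_add_left : ∀ a b c : J, T (a + b) c = T a c + T b c
  T_smul_left : ∀ (t : K) (a b : J), T (t • a) b = t * T a b
  T_symm : ∀ a b : J, T a b = T b a
  sharp_smul : ∀ (t : K) (a : J), sharp (t • a) = t ^ 2 • sharp a
  N_smul : ∀ (t : K) (a : J), N (t • a) = t ^ 3 * N a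
  N_add : ∀ a b : J, N (a + b) = N a + T b (sharp a) + T a (sharp b) + N b
  sharp_sharp : ∀ a : J, sharp (sharp a) = N a • a
  sharp_one : sharp one = one
  one_cross : ∀ b : J, b = T b one • one - (sharp (one + b) - sharp one - sharp b)

namespace CubicNormStructure

variable {K : Type*} [CommRing K] {J : Type*} [AddCommGroup J] [Module K J]

/-- The linearization `a × b` of the adjoint map. -/
def cross (S : CubicNormStructure K J) (a b : J) : J :=
  S.sharp (a + b) - S.sharp a - S.sharp b

/-- The `U`-operator `U_a(b) = T(a,b)•a − a♯ × b`. -/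
def U (S : CubicNormStructure K J) (a b : J) : J :=
  S.T a b • a - S.cross (S.sharp a) b

end CubicNormStructure

namespace CubicNormStructure

variable {K : Type*} [CommRing K] {J : Type*} [AddCommGroup J] [Module K J]
variable (S : CubicNormStructure K J)

lemma cross_def (a b : J) : S.cross a b = S.sharp (a + b) - S.sharp a - S.sharp b := rfl

lemma T_add_right (a b c : J) : S.T a (b + c) = S.T a b + S.T a c := by
  rw [S.T_symm, S.T_add_left, S.T_symm b a, S.T_symm c a]

lemma T_smul_right (t : K) (a b : J) : S.T a (t • b) = t * S.T a b := by
  rw [S.T_symm, S.T_smul_left, S.T_symm b a]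

lemma T_neg_left (a b : J) : S.T (-a) b = - S.T a b := by
  rw [← neg_one_smul K a, S.T_smul_left]; ring

lemma T_sub_left (a b c : J) : S.T (a - b) c = S.T a c - S.T b c := by
  rw [sub_eq_add_neg, S.T_add_left, S.T_neg_left, sub_eq_add_neg]

lemma T_sub_right (a b c : J) : S.T a (b - c) = S.T a b - S.T a c := by
  rw [S.T_symm, S.T_sub_left, S.T_symm b a, S.T_symm c a]

lemma T_zero_left (a : J) : S.T 0 a = 0 := by
  have h := S.T_smul_left 0 0 a
  rw [zero_smul] at h
  simpa using h

lemma T_zero_right (a : J) : S.T a 0 = 0 := by rw [S.T_symm, S.T_zero_left]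

lemma sharp_zero : S.sharp 0 = 0 := by
  have h := S.sharp_smul 0 0
  rw [zero_smul] at h
  simpa using h

lemma sharp_neg (a : J) : S.sharp (-a) = S.sharp a := by
  have h := S.sharp_smul (-1) a
  rw [neg_one_smul] at h
  simpa using h

lemma N_neg (a : J) : S.N (-a) = - S.N a := by
  have h := S.N_smul (-1) a
  rw [neg_one_smul] at h
  have h3 : ((-1:K))^3 = -1 := by ring
  rw [h3, neg_one_mul] at h
  exact h

lemma sharp_add (a b : J) : S.sharp (a + b) = S.sharp a + S.sharp b + S.cross a b := by
  rw [cross_def]; abel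

lemma cross_comm (a b : J) : S.cross a b = S.cross b a := by
  rw [cross_def, cross_def, add_comm a b]; abel

lemma cross_zero_right (a : J) : S.cross a 0 = 0 := by
  rw [cross_def, add_zero, S.sharp_zero]; abel

lemma cross_zero_left (a : J) : S.cross 0 a = 0 := by
  rw [S.cross_comm, S.cross_zero_right]

lemma cross_self (a : J) : S.cross a a = (2:K) • S.sharp a := by
  rw [cross_def, show a + a = (2:K) • a from (two_smul K a).symm, S.sharp_smul]
  module

lemma cross_smul_self (t : K) (a : J) : S.cross a (t • a) = (2*t) • S.sharp a := by
  rw [cross_def, show a + t • a = (1 + t) • a by module, S.sharp_smul, S.sharp_smul]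
  module

lemma T_cross_cycle (a b c : J) : S.T c (S.cross a b) = S.T a (S.cross b c) := by
  have h1 := S.N_add (a + b) c
  have h3 := S.N_add a (b + c)
  rw [add_assoc, S.N_add a b, S.sharp_add a b, S.T_add_right, S.T_add_right,
    S.T_add_left a b] at h1
  rw [S.N_add b c, S.sharp_add b c, S.T_add_left b c, S.T_add_right, S.T_add_right] at h3
  linear_combination h3 - h1

lemma T_cross_left (X a : J) : S.T (S.cross X a) a = 2 * S.T X (S.sharp a) := by
  rw [S.T_symm, S.T_cross_cycle, S.cross_self, S.T_smul_right]

lemma T_cross_right (X a : J) : S.T a (S.cross X a) = 2 * S.T X (S.sharp a) := by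
  rw [S.T_symm, S.T_cross_left]

lemma T_cross_smul_left (t : K) (X a : J) :
    S.T (S.cross X (t • a)) a = (2*t) * S.T X (S.sharp a) := by
  rw [S.T_symm, S.T_cross_cycle, S.cross_comm, S.cross_smul_self, S.T_smul_right]

lemma T_cross_smul_right (t : K) (X a : J) :
    S.T a (S.cross X (t • a)) = (2*t) * S.T X (S.sharp a) := by
  rw [S.T_symm, S.T_cross_smul_left]

lemma T_sharp_self (h2 : IsUnit (2:K)) (a : J) : S.T a (S.sharp a) = 3 * S.N a := by
  have h := S.N_add a a
  rw [show a + a = (2:K) • a from (two_smul K a).symm, S.N_smul] at h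
  have h' : (2:K) * S.T a (S.sharp a) = (2:K) * (3 * S.N a) := by linear_combination -h
  exact h2.mul_left_cancel h'

end CubicNormStructure

section AAlgebra

variable {K : Type*} [CommRing K] {J : Type*} [AddCommGroup J] [Module K J]

/-- The multiplication of the algebra `A = K ⊕ J` of Theorem 3.3:
`(s,b)(t,c) = (st + T(b, φ(c)), s•c + σ(t)•b + γ•(φ(b) × φ(c)))`. -/
def Amul (S : CubicNormStructure K J) (σ : K → K) (φ : J → J) (γ : K)
    (x y : K × J) : K × J :=
  (x.1 * y.1 + S.T x.2 (φ y.2),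
    x.1 • y.2 + σ y.1 • x.2 + γ • S.cross (φ x.2) (φ y.2))

/-- The involution of `A = K ⊕ J`: `(s,b)‾ = (σ(s), b)`. -/
def Abar (σ : K → K) (x : K × J) : K × J := (σ x.1, x.2)

end AAlgebra

/-- The operator `V_{x,y}(z) = (x·ȳ)·z + (z·ȳ)·x − (z·x̄)·y`. -/
def AV {A : Type*} [AddCommGroup A] (mul : A → A → A) (bar : A → A)
    (x y z : A) : A :=
  mul (mul x (bar y)) z + mul (mul z (bar y)) x - mul (mul z (bar x)) y

/-- `A`, equipped with the bilinear multiplication `mul`, unit `one` and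
`F`-linear involution `bar`, is a structurable `F`-algebra: `bar` is an additive,
`F`-linear involution with `(xy)‾ = ȳ x̄`, `mul` is `F`-bilinear with unit `one`,
and the structurable identity `[V_{x,y}, V_{z,w}] = V_{V_{x,y}z, w} − V_{z, V_{y,x}w}`
holds (stated pointwise). -/
def IsStructurable (F : Type*) [Field F] {A : Type*} [AddCommGroup A] [Module F A]
    (mul : A → A → A) (bar : A → A) (one : A) : Prop :=
  (∀ x y, bar (x + y) = bar x + bar y) ∧
  (∀ (c : F) (x), bar (c • x) = c • bar x) ∧
  (∀ x, bar (bar x) = x) ∧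
  (∀ x y, bar (mul x y) = mul (bar y) (bar x)) ∧
  (∀ x y z, mul (x + y) z = mul x z + mul y z) ∧
  (∀ x y z, mul x (y + z) = mul x y + mul x z) ∧
  (∀ (c : F) (x y), mul (c • x) y = c • mul x y) ∧
  (∀ (c : F) (x y), mul x (c • y) = c • mul x y) ∧
  (∀ x, mul one x = x ∧ mul x one = x) ∧
  (∀ x y z w v,
    AV mul bar x y (AV mul bar z w v) - AV mul bar z w (AV mul bar x y v) =
    AV mul bar (AV mul bar x y z) w v - AV mul bar z (AV mul bar y x w) v)

/-- The skew elements of `(A, bar)` form a one-dimensional `F`-subspace. -/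
def SkewDimOne (F : Type*) [Field F] {A : Type*} [AddCommGroup A] [Module F A]
    (bar : A → A) : Prop :=
  ∃ s₀ : A, bar s₀ = -s₀ ∧ s₀ ≠ 0 ∧ ∀ x, bar x = -x → ∃ c : F, x = c • s₀

/-- `ψ(x,y) = x·ȳ − y·x̄`. -/
def Apsi {A : Type*} [AddCommGroup A] (mul : A → A → A) (bar : A → A)
    (x y : A) : A :=
  mul x (bar y) - mul y (bar x)

/-- `U_x(y) = 2(x·ȳ)·x − (x·x̄)·y`. -/
def AUop {A : Type*} [AddCommGroup A] (mul : A → A → A) (bar : A → A)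
    (x y : A) : A :=
  2 • mul (mul x (bar y)) x - mul (mul x (bar x)) y

/-- Proposition 3.6: the norm of the structurable algebra `A = K ⊕ J` is
`ν(s,b) = (Nr(s) − T(b, φ(b)))² − 4T(b♯, φ(b)♯) + 4Tr(γ⁻¹ s N(b))`, in the sense
that `ψ(x, U_x(s₀x))·s₀ = 6μ·ν(s,b)·(1,0)` for every `x = (s,b)`, where
`s₀ = (u,0)` is skew and `μ = u² ∈ F`. -/
theorem stmt12 {F : Type*} [Field F] (h2 : (2 : F) ≠ 0) (h3 : (3 : F) ≠ 0)
    {K : Type*} [CommRing K] [Algebra F K]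
    (hdim : Module.finrank F K = 2)
    (hred : ∀ t : K, t * t = 0 → t = 0)
    (σ : K ≃ₐ[F] K)
    (hσσ : ∀ t : K, σ (σ t) = t)
    (hfix : ∀ t : K, σ t = t ↔ ∃ c : F, t = algebraMap F K c)
    {J : Type*} [AddCommGroup J] [Module K J] [Module F J] [IsScalarTower F K J]
    (S : CubicNormStructure K J)
    (φ : J → J)
    (hbij : Function.Bijective φ)
    (hadd : ∀ a b : J, φ (a + b) = φ a + φ b)
    (hsemi : ∀ (t : K) (a : J), φ (t • a) = σ t • φ a)
    (hinv : IsUnit (S.N (φ S.one)))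
    (haut : ∀ a : J, φ (S.sharp a) =
      Ring.inverse (S.N (φ S.one)) • S.U (φ S.one) (S.sharp (φ a)))
    (hself : ∀ b : J, φ (φ b) = S.U (φ S.one) b)
    (γ : K) (hγ : γ * σ γ = Ring.inverse (S.N (φ S.one)))
    (u : K) (hu : u ≠ 0) (huskew : σ u = -u) :
    (∃ μ : F, algebraMap F K μ = u ^ 2) ∧
    ∀ (s : K) (b : J),
      Amul S (⇑σ) φ γ
        (Apsi (Amul S (⇑σ) φ γ) (Abar (⇑σ)) ((s, b) : K × J)
          (AUop (Amul S (⇑σ) φ γ) (Abar (⇑σ)) ((s, b) : K × J)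
            (Amul S (⇑σ) φ γ ((u, 0) : K × J) ((s, b) : K × J))))
        ((u, 0) : K × J) =
      ((6 : K) * u ^ 2 *
        ((s * σ s - S.T b (φ b)) ^ 2 - 4 * S.T (S.sharp b) (S.sharp (φ b)) +
          4 * (Ring.inverse γ * s * S.N b + σ (Ring.inverse γ * s * S.N b))),
        (0 : J)) := by
  classical
  obtain ⟨ψf, hψl, hψr⟩ := Function.bijective_iff_has_inverse.mp hbij
  have φinj : Function.Injective φ := hbij.1
  -- units
  have h2K : IsUnit (2:K) := by
    have h := (isUnit_iff_ne_zero.mpr h2).map (algebraMap F K)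
    rwa [map_ofNat] at h
  have h3K : IsUnit (3:K) := by
    have h := (isUnit_iff_ne_zero.mpr h3).map (algebraMap F K)
    rwa [map_ofNat] at h
  have h6K : IsUnit (6:K) := by
    have h := h2K.mul h3K
    rwa [show (2:K)*3 = 6 by norm_num] at h
  -- abbreviations
  obtain ⟨δ, hδdef⟩ : ∃ x : K, x = S.N (φ S.one) := ⟨_, rfl⟩
  obtain ⟨d, hddef⟩ : ∃ x : K, x = Ring.inverse (S.N (φ S.one)) := ⟨_, rfl⟩
  rw [← hδdef] at hinv
  rw [← hddef] at hγ haut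
  have hdδ : d * δ = 1 := by rw [hddef, hδdef]; exact Ring.inverse_mul_cancel _ (hδdef ▸ hinv)
  have hδd : δ * d = 1 := by rw [mul_comm]; exact hdδ
  have hσd : σ d = d := by rw [← hγ, map_mul, hσσ, mul_comm]
  have hσδ : σ δ = δ := by
    have hud : IsUnit d := IsUnit.of_mul_eq_one δ hdδ
    refine hud.mul_left_cancel ?_
    have h1 := congrArg σ hdδ
    rw [map_mul, map_one, hσd] at h1
    rw [h1, hdδ]
  have hrel : γ * (σ γ * δ) = 1 := by rw [← mul_assoc, hγ, hdδ]
  have hγinv : Ring.inverse γ = σ γ * δ := by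
    have hug : IsUnit γ := IsUnit.of_mul_eq_one _ hrel
    have h1 : Ring.inverse γ * γ = 1 := Ring.inverse_mul_cancel _ hug
    calc Ring.inverse γ = Ring.inverse γ * (γ * (σ γ * δ)) := by rw [hrel, mul_one]
      _ = (Ring.inverse γ * γ) * (σ γ * δ) := by ring
      _ = σ γ * δ := by rw [h1, one_mul]
  -- phi additive facts
  have φ0 : φ 0 = 0 := by
    have h := hadd 0 0
    rw [add_zero] at h
    have h2' : φ 0 + φ 0 = φ 0 + 0 := by rw [add_zero]; exact h.symm
    exact add_left_cancel h2'
  have φsub : ∀ a b : J, φ (a - b) = φ a - φ b := by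
    intro a b
    have h := hadd (a - b) b
    rw [sub_add_cancel] at h
    exact eq_sub_of_add_eq h.symm
  have φneg : ∀ a : J, φ (-a) = - φ a := by
    intro a
    have h := φsub 0 a
    rwa [zero_sub, φ0, zero_sub] at h
  have ψsemi : ∀ (t : K) (x : J), ψf (t • x) = σ t • ψf x := by
    intro t x
    apply φinj
    rw [hψr, hsemi, hσσ, hψr]
  -- key phi-sharp facts
  have L2 : ∀ a : J, φ (S.sharp (φ a)) = δ • S.sharp a := by
    intro a
    apply φinj
    have h1 := haut a
    rw [← hself (S.sharp (φ a))] at h1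
    rw [hsemi, hσδ, h1, smul_smul, hδd, one_smul]
  have ψsharp : ∀ w : J, S.sharp (ψf w) = d • φ (S.sharp w) := by
    intro w
    have h := L2 (ψf w)
    rw [hψr] at h
    rw [h, smul_smul, hdδ, one_smul]
  have sharpφ : ∀ a : J, S.sharp (φ a) = δ • ψf (S.sharp a) := by
    intro a
    have h := congrArg ψf (L2 a)
    rwa [hψl, ψsemi, hσδ] at h
  -- norm compatibility
  have sq_ann : ∀ (t : K) (w : J), t • w = 0 → t^2 * S.N w = 0 := by
    intro t w ht
    have e1 := S.N_smul (1+t) w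
    have e2 := S.N_smul (1-t) w
    rw [add_smul, one_smul, ht, add_zero] at e1
    rw [sub_smul, one_smul, ht, sub_zero] at e2
    refine h6K.mul_left_cancel ?_
    rw [mul_zero]
    linear_combination -e1 - e2
  have hBnorm : ∀ a : J, S.N (φ a) = δ * σ (S.N a) := by
    intro a
    have hss := S.sharp_sharp (φ a)
    rw [sharpφ a, S.sharp_smul, ψsharp, S.sharp_sharp, hsemi, smul_smul, smul_smul] at hss
    have hc : δ ^ 2 * d * σ (S.N a) = δ * σ (S.N a) := by
      linear_combination (δ * σ (S.N a)) * hδd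
    have hann : (S.N (φ a) - δ * σ (S.N a)) • φ a = 0 := by
      rw [sub_smul, ← hss, hc, sub_self]
    obtain ⟨lam, hlam⟩ : ∃ x : K, x = S.N (φ a) - δ * σ (S.N a) := ⟨_, rfl⟩
    rw [← hlam] at hann
    have k1 : lam ^ 2 * S.N (φ a) = 0 := sq_ann _ _ hann
    have hσlam : σ lam • a = 0 := by
      apply φinj
      rw [hsemi, hσσ, φ0]
      exact hann
    have k2' : (σ lam) ^ 2 * S.N a = 0 := sq_ann _ _ hσlam
    have k2 : lam ^ 2 * σ (S.N a) = 0 := by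
      have h := congrArg σ k2'
      rwa [map_mul, map_pow, hσσ, map_zero] at h
    have h4 : lam ^ 3 = 0 := by
      have : lam ^ 3 = lam ^ 2 * (S.N (φ a) - δ * σ (S.N a)) := by rw [← hlam]; ring
      rw [this]
      linear_combination k1 - δ * k2
    have k3 : lam * lam = 0 := by
      refine hred _ ?_
      calc (lam*lam)*(lam*lam) = lam ^ 3 * lam := by ring
        _ = 0 := by rw [h4, zero_mul]
    have hl0 : lam = 0 := hred _ k3
    exact sub_eq_zero.mp (hlam.symm.trans hl0)
  -- L5 : T(phi x, (phi y)#) = delta * sigma(T x y#)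
  have L5 : ∀ x y : J, S.T (φ x) (S.sharp (φ y)) = δ * σ (S.T x (S.sharp y)) := by
    intro x y
    have e1 := hBnorm (x + y)
    rw [hadd, S.N_add, S.N_add, map_add, map_add, map_add] at e1
    have e2 := hBnorm (x + (-y))
    rw [hadd, φneg, S.N_add, S.N_add, S.T_neg_left, S.T_neg_left,
      S.sharp_neg, S.sharp_neg, S.N_neg, S.N_neg,
      map_add, map_add, map_add, map_neg, map_neg] at e2
    refine h2K.mul_left_cancel ?_
    linear_combination e1 + e2 - 2 * hBnorm x
  have L6 : ∀ e x y : J, S.T (φ e) (S.cross (φ x) (φ y)) = δ * σ (S.T e (S.cross x y)) := by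
    intro e x y
    have h1 := L5 e (x + y)
    rw [hadd, S.sharp_add (φ x) (φ y), S.T_add_right, S.T_add_right,
      S.sharp_add x y, S.T_add_right, S.T_add_right, map_add, map_add] at h1
    linear_combination h1 - L5 e x - L5 e y
  have hψone : φ (ψf S.one) = S.one := hψr S.one
  have L9 : ∀ x : J, S.T (φ x) S.one = σ (S.T x (φ S.one)) := by
    intro x
    have h := L5 x (ψf S.one)
    rw [hψone, S.sharp_one, ψsharp, S.sharp_one, S.T_smul_right, map_mul, hσd] at h
    linear_combination h + σ (S.T x (φ S.one)) * hδd
  have Det : ∀ A B : J, S.T A B = S.T B S.one * S.T A S.one - S.T S.one (S.cross B A) := by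
    intro A B
    conv_lhs => rw [S.one_cross B]
    rw [← S.cross_def, S.T_sub_right, S.T_smul_right, S.T_cross_cycle]
  have L11 : ∀ a c : J, S.T (φ a) c = σ (S.T a (φ c)) := by
    have H : ∀ x y : J, S.T (φ x) (φ y) = σ (S.T x (φ (φ y))) := by
      intro x y
      have hDet := Det (φ x) (φ y)
      rw [L9 y, L9 x] at hDet
      have hcr : S.T S.one (S.cross (φ y) (φ x)) = δ * σ (S.T (ψf S.one) (S.cross y x)) := by
        have h := L6 (ψf S.one) y x
        rwa [hψone] at h
      rw [hcr] at hDet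
      have hU : φ (φ y) = S.T (φ S.one) y • (φ S.one) - S.cross (S.sharp (φ S.one)) y := by
        rw [hself]; rfl
      have hzsharp : S.sharp (φ S.one) = δ • ψf S.one := by
        have h := sharpφ S.one
        rwa [S.sharp_one] at h
      have hR : S.T x (φ (φ y)) = S.T (φ S.one) y * S.T x (φ S.one)
          - δ * S.T (ψf S.one) (S.cross y x) := by
        rw [hU, S.T_sub_right, S.T_smul_right, hzsharp, S.T_cross_cycle, S.T_smul_left]
      rw [hDet, hR, map_sub, map_mul, map_mul, hσδ, S.T_symm (φ S.one) y]
    intro a c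
    have h := H a (ψf c)
    rwa [hψr] at h
  refine ⟨?_, ?_⟩
  · have hfixu : σ (u^2) = u^2 := by rw [pow_two, map_mul, huskew]; ring
    obtain ⟨c0, hc0⟩ := (hfix _).mp hfixu
    exact ⟨c0, hc0.symm⟩
  intro s b
  -- scalar atoms
  have hh : σ (S.T b (φ b)) = S.T b (φ b) := by
    have h := (L11 b b).symm
    rwa [S.T_symm (φ b) b] at h
  have hbsharp : S.sharp b = d • φ (S.sharp (φ b)) := by
    rw [L2 b, smul_smul, hdδ, one_smul]
  have hq : σ (S.T (S.sharp b) (S.sharp (φ b))) = S.T (S.sharp b) (S.sharp (φ b)) := by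
    have h1 : S.T (S.sharp b) (S.sharp (φ b))
        = d * (δ * σ (S.T (S.sharp b) (S.sharp (φ b)))) := by
      conv_lhs => rw [hbsharp]
      rw [S.T_smul_left, L11, L2, S.T_smul_right, map_mul, hσδ,
        S.T_symm (S.sharp (φ b)) (S.sharp b)]
    have h2 := h1
    rw [← mul_assoc, hdδ, one_mul] at h2
    exact h2.symm
  have hTb₃ : S.T b (S.sharp b) = 3 * S.N b := S.T_sharp_self h2K b
  have hTφb : S.T (φ b) (S.sharp (φ b)) = 3 * (δ * σ (S.N b)) := by
    rw [S.T_sharp_self h2K, hBnorm]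
  have hTscφb : S.T (S.sharp (φ b)) (φ b) = 3 * (δ * σ (S.N b)) := by
    rw [S.T_symm]; exact hTφb
  have hNv : S.T (φ (φ b)) (S.sharp (φ (φ b))) = 3 * (δ * (δ * S.N b)) := by
    rw [S.T_sharp_self h2K, hBnorm, hBnorm, map_mul, hσδ, hσσ]
  have hTgv : S.T (φ (S.sharp b)) (S.sharp (φ (φ b))) = δ * S.T (S.sharp b) (S.sharp (φ b)) := by
    have h := L5 (S.sharp b) (φ b)
    rwa [hq] at h
  -- phi images of the E-vectors
  have hφB2 : φ ((2*(u*s)) • b - (2*(u*γ)) • S.sharp (φ b))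
      = (-(2*(u*σ s))) • φ b + (2*(u*σ γ)*δ) • S.sharp b := by
    rw [φsub, hsemi, hsemi, L2]
    simp only [map_mul, map_ofNat, huskew]
    module
  have hφA2 : φ ((2*s) • b + (2*γ) • S.sharp (φ b))
      = (2*σ s) • φ b + (2*σ γ*δ) • S.sharp b := by
    rw [hadd, hsemi, hsemi, L2]
    simp only [map_mul, map_ofNat]
    module
  have hφE1 : φ ((-(2*(u*σ s))) • φ b + (2*(u*σ γ)*δ) • S.sharp b)
      = (2*(u*s)) • φ (φ b) - (2*(u*γ)*δ) • φ (S.sharp b) := by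
    rw [hadd, hsemi, hsemi]
    simp only [map_mul, map_neg, map_ofNat, huskew, hσσ, hσδ]
    module
  have hφE2 : φ ((2*σ s) • φ b + (2*σ γ*δ) • S.sharp b)
      = (2*s) • φ (φ b) + (2*(γ*δ)) • φ (S.sharp b) := by
    rw [hadd, hsemi, hsemi]
    simp only [map_mul, map_ofNat, hσσ, hσδ]
    module
  -- phi of cross
  have F8 : ∀ X Y : J, δ • φ (S.cross X Y) = φ (φ (S.cross (φ X) (φ Y))) := by
    intro X Y
    have e1 : φ (S.sharp (X+Y)) = d • φ (φ (S.sharp (φ X + φ Y))) := by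
      have h := haut (X+Y)
      rwa [← hself, hadd] at h
    have e2 : φ (S.sharp X) = d • φ (φ (S.sharp (φ X))) := by
      have h := haut X; rwa [← hself] at h
    have e3 : φ (S.sharp Y) = d • φ (φ (S.sharp (φ Y))) := by
      have h := haut Y; rwa [← hself] at h
    have e : φ (S.cross X Y) = φ (S.sharp (X+Y)) - φ (S.sharp X) - φ (S.sharp Y) := by
      rw [S.cross_def, φsub, φsub]
    have e' : φ (φ (S.cross (φ X) (φ Y)))
        = φ (φ (S.sharp (φ X + φ Y))) - φ (φ (S.sharp (φ X))) - φ (φ (S.sharp (φ Y))) := by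
      rw [S.cross_def, φsub, φsub, φsub, φsub]
    rw [e, e1, e2, e3, e', smul_sub, smul_sub, smul_smul, smul_smul, smul_smul, hδd,
      one_smul, one_smul, one_smul]
  have L11twice : ∀ x w : J, S.T x (φ (φ w)) = S.T (φ (φ x)) w := by
    intro x w
    rw [S.T_symm, L11, L11, hσσ, S.T_symm]
  have hTphicross : ∀ X Y : J,
      δ * S.T b (φ (S.cross X Y)) = S.T (φ (φ b)) (S.cross (φ X) (φ Y)) := by
    intro X Y
    rw [← S.T_smul_right, F8, L11twice]
  -- the two cross evaluations
  have hX1 : S.T b (φ (S.cross ((-(2*(u*σ s))) • φ b + (2*(u*σ γ)*δ) • S.sharp b) (φ b)))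
      = 12*(u*(s*(δ*S.N b))) - 4*(u*(γ*(δ*S.T (S.sharp b) (S.sharp (φ b))))) := by
    refine hinv.mul_left_cancel ?_
    rw [hTphicross, hφE1, S.T_cross_right, S.T_sub_left, S.T_smul_left, S.T_smul_left,
      hNv, hTgv]
    ring
  have hX2 : S.T b (φ (S.cross ((2*σ s) • φ b + (2*σ γ*δ) • S.sharp b) ((-u) • φ b)))
      = 12*(u*(s*(δ*S.N b))) + 4*(u*(γ*(δ*S.T (S.sharp b) (S.sharp (φ b))))) := by
    refine hinv.mul_left_cancel ?_
    rw [hTphicross, hφE2,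
      show φ ((-u) • φ b) = u • φ (φ b) by rw [hsemi, map_neg, huskew, neg_neg],
      S.T_cross_smul_right, S.T_add_left, S.T_smul_left, S.T_smul_left, hNv, hTgv]
    ring
  -- component computations
  have hw : Amul S (⇑σ) φ γ ((u, 0) : K × J) ((s, b) : K × J) = (u * s, u • b) := by
    simp [Amul, φ0, S.T_zero_left, S.cross_zero_left]
  have hA : Amul S (⇑σ) φ γ ((s, b) : K × J) (Abar (⇑σ) (s, b))
      = (s * σ s + S.T b (φ b), (2*s) • b + (2*γ) • S.sharp (φ b)) := by
    simp only [Amul, Abar]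
    rw [Prod.mk.injEq]
    refine ⟨rfl, ?_⟩
    rw [hσσ, S.cross_self]
    module
  have hB : Amul S (⇑σ) φ γ ((s, b) : K × J) (Abar (⇑σ) (u * s, u • b))
      = (-(u*(s*σ s + S.T b (φ b))), (2*(u*s)) • b - (2*(u*γ)) • S.sharp (φ b)) := by
    simp only [Amul, Abar]
    rw [Prod.mk.injEq]
    constructor
    · rw [map_mul, hsemi, huskew, S.T_smul_right]
      ring
    · rw [hσσ, hsemi, huskew, S.cross_smul_self]
      module
  have hTB2 : S.T ((2*(u*s)) • b - (2*(u*γ)) • S.sharp (φ b)) (φ b)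
      = 2*(u*s)*S.T b (φ b) - 2*(u*γ)*(3*(δ*σ (S.N b))) := by
    rw [S.T_sub_left, S.T_smul_left, S.T_smul_left, hTscφb]
  have hTA2 : S.T ((2*s) • b + (2*γ) • S.sharp (φ b)) (φ b)
      = 2*s*S.T b (φ b) + 2*γ*(3*(δ*σ (S.N b))) := by
    rw [S.T_add_left, S.T_smul_left, S.T_smul_left, hTscφb]
  have hC : Amul S (⇑σ) φ γ
      ((-(u*(s*σ s + S.T b (φ b))), (2*(u*s)) • b - (2*(u*γ)) • S.sharp (φ b)) : K × J)
      ((s, b) : K × J)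
      = (-(u*(s*σ s + S.T b (φ b)))*s + (2*(u*s)*S.T b (φ b) - 2*(u*γ)*(3*(δ*σ (S.N b)))),
         (-(u*(s*σ s + S.T b (φ b)))) • b
           + σ s • ((2*(u*s)) • b - (2*(u*γ)) • S.sharp (φ b))
           + γ • S.cross ((-(2*(u*σ s))) • φ b + (2*(u*σ γ)*δ) • S.sharp b) (φ b)) := by
    simp only [Amul]
    rw [Prod.mk.injEq]
    exact ⟨by rw [hTB2], by rw [hφB2]⟩
  have hD : Amul S (⇑σ) φ γ
      ((s*σ s + S.T b (φ b), (2*s) • b + (2*γ) • S.sharp (φ b)) : K × J)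
      ((u*s, u • b) : K × J)
      = ((s*σ s + S.T b (φ b))*(u*s) + (-u)*(2*s*S.T b (φ b) + 2*γ*(3*(δ*σ (S.N b)))),
         (s*σ s + S.T b (φ b)) • (u • b)
           + σ (u*s) • ((2*s) • b + (2*γ) • S.sharp (φ b))
           + γ • S.cross ((2*σ s) • φ b + (2*σ γ*δ) • S.sharp b) ((-u) • φ b)) := by
    simp only [Amul]
    rw [Prod.mk.injEq]
    constructor
    · rw [hsemi, huskew, S.T_smul_right, hTA2]
    · rw [hφA2, hsemi, huskew]
  have hy : ∀ (p1 q1 : K) (p2 q2 : J),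
      (2:ℕ) • ((p1, p2) : K × J) - (q1, q2) = (p1 + p1 - q1, p2 + p2 - q2) := by
    intro p1 q1 p2 q2
    rw [two_nsmul]
    rfl
  have hgen : ∀ (Y1 : K) (Y2 : J),
      Amul S (⇑σ) φ γ (Apsi (Amul S (⇑σ) φ γ) (Abar (⇑σ)) ((s, b) : K × J) (Y1, Y2))
        ((u, 0) : K × J)
      = ((s * σ Y1 + S.T b (φ Y2) - (Y1 * σ s + S.T Y2 (φ b))) * u, 0) := by
    intro Y1 Y2
    simp only [Apsi, Abar, Amul, Prod.mk_sub_mk]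
    rw [Prod.mk.injEq]
    constructor
    · rw [φ0, S.T_zero_right, add_zero]
    · have hz2 : s • Y2 + σ (σ Y1) • b + γ • S.cross (φ b) (φ Y2)
          - (Y1 • b + σ (σ s) • Y2 + γ • S.cross (φ Y2) (φ b)) = 0 := by
        rw [hσσ, hσσ, S.cross_comm]
        abel
      rw [hz2, φ0]
      simp [S.cross_zero_left]
  -- the two big T computations
  have hTY2c : S.T
      (((-(u*(s*σ s + S.T b (φ b)))) • b
          + σ s • ((2*(u*s)) • b - (2*(u*γ)) • S.sharp (φ b))
          + γ • S.cross ((-(2*(u*σ s))) • φ b + (2*(u*σ γ)*δ) • S.sharp b) (φ b))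
        + ((-(u*(s*σ s + S.T b (φ b)))) • b
          + σ s • ((2*(u*s)) • b - (2*(u*γ)) • S.sharp (φ b))
          + γ • S.cross ((-(2*(u*σ s))) • φ b + (2*(u*σ γ)*δ) • S.sharp b) (φ b))
        - ((s*σ s + S.T b (φ b)) • (u • b)
          + σ (u*s) • ((2*s) • b + (2*γ) • S.sharp (φ b))
          + γ • S.cross ((2*σ s) • φ b + (2*σ γ*δ) • S.sharp b) ((-u) • φ b)))
      (φ b)
      = -(3*(u*((s*σ s + S.T b (φ b))*S.T b (φ b)))) + 6*(u*(s*(σ s*S.T b (φ b))))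
        - 6*(u*(γ*(σ s*(3*(δ*σ (S.N b)))))) + 12*(u*S.T (S.sharp b) (S.sharp (φ b))) := by
    simp only [S.T_sub_left, S.T_add_left, S.T_smul_left]
    rw [S.T_cross_left, S.T_cross_smul_left]
    simp only [S.T_add_left, S.T_sub_left, S.T_smul_left]
    rw [hTφb, hTscφb]
    simp only [map_mul, map_neg, map_add, map_ofNat, huskew, hσσ, hσδ, hh]
    linear_combination (12*(u*S.T (S.sharp b) (S.sharp (φ b)))) * hrel
  have hTbY2 : S.T b (φ
      (((-(u*(s*σ s + S.T b (φ b)))) • b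
          + σ s • ((2*(u*s)) • b - (2*(u*γ)) • S.sharp (φ b))
          + γ • S.cross ((-(2*(u*σ s))) • φ b + (2*(u*σ γ)*δ) • S.sharp b) (φ b))
        + ((-(u*(s*σ s + S.T b (φ b)))) • b
          + σ s • ((2*(u*s)) • b - (2*(u*γ)) • S.sharp (φ b))
          + γ • S.cross ((-(2*(u*σ s))) • φ b + (2*(u*σ γ)*δ) • S.sharp b) (φ b))
        - ((s*σ s + S.T b (φ b)) • (u • b)
          + σ (u*s) • ((2*s) • b + (2*γ) • S.sharp (φ b))
          + γ • S.cross ((2*σ s) • φ b + (2*σ γ*δ) • S.sharp b) ((-u) • φ b))))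
      = 3*(u*((σ s*s + S.T b (φ b))*S.T b (φ b))) - 6*(u*(s*(σ s*S.T b (φ b))))
        + 18*(u*(s*(σ γ*(δ*S.N b)))) - 12*(u*S.T (S.sharp b) (S.sharp (φ b))) := by
    simp only [φsub, hadd, hsemi, L2, hσσ]
    simp only [S.T_add_right, S.T_sub_right, S.T_smul_right]
    rw [hX1, hX2, hTb₃]
    simp only [map_mul, map_neg, map_add, map_ofNat, huskew, hσσ, hσδ, hh]
    linear_combination (-(12*(u*S.T (S.sharp b) (S.sharp (φ b))))) * hrel
  -- final assembly
  rw [hw]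
  simp only [AUop]
  rw [hB, hC, hA, hD, hy, hgen, Prod.mk.injEq]
  refine ⟨?_, rfl⟩
  rw [hTbY2, hTY2c, hγinv]
  simp only [map_add, map_sub, map_mul, map_neg, map_ofNat, huskew, hσσ, hσδ, hh]
  ring
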